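/- Let d ≥ 1, 0 < b < min{2,d}, α_* < α < α*. If u ∈ H¹(ℝ^d) satisfies ‖∇u‖_{L²} ‖u‖^σ_{L²} ≥ (1+δ') ‖∇Q‖_{L²}‖Q‖^σ_{L²} and E(u) M(u)^σ ≤ (1−δ) E(Q) M(Q)^σ for some δ, δ' > 0, then for all sufficiently small ε > 0 there is c > 0 such that 8‖∇u‖²_{L²} − (4(dα+2b)/(α+2)) ∫|x|^(−b)|u|^(α+2) dx + ε‖∇u‖²_{L²} ≤ −c < 0. -/
import Mathlib


open MeasureTheory

set_option maxHeartbeats 1000000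

/-- Refined virial estimate above the ground state: if
`‖∇u‖ ‖u‖^σ ≥ (1+δ') ‖∇Q‖ ‖Q‖^σ` and `E(u) M(u)^σ ≤ (1-δ) E(Q) M(Q)^σ`, then for all
sufficiently small `ε > 0` there is `c > 0` with
`8‖∇u‖² - (4(dα+2b)/(α+2)) ∫ |x|^(-b)|u|^(α+2) + ε‖∇u‖² ≤ -c`. -/
theorem refined_virial_estimate (d : ℕ) (b α σ : ℝ) (hd : 1 ≤ d)
    (hb : 0 < b) (hb' : b < min 2 (d : ℝ))
    (hlow : (4 - 2 * b) / (d : ℝ) < α)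
    (hhigh : 3 ≤ d → α < (4 - 2 * b) / ((d : ℝ) - 2))
    (hσ : σ = (4 - 2 * b - ((d : ℝ) - 2) * α) / ((d : ℝ) * α - (4 - 2 * b)))
    (δ δ' : ℝ) (hδ : 0 < δ) (hδ' : 0 < δ')
    (gQ nQ EQMQ : ℝ) (hgQ : 0 < gQ) (hnQ : 0 < nQ)
    (hEQMQ : EQMQ = (((d : ℝ) * α - (4 - 2 * b)) / (2 * ((d : ℝ) * α + 2 * b)))
      * (gQ * nQ ^ σ) ^ 2)
    (u : EuclideanSpace ℝ (Fin d) → ℂ) (G N P : ℝ)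
    (hG : G = Real.sqrt (∫ x : EuclideanSpace ℝ (Fin d), ‖fderiv ℝ u x‖ ^ 2))
    (hN : N = Real.sqrt (∫ x : EuclideanSpace ℝ (Fin d), ‖u x‖ ^ 2))
    (hP : P = ∫ x : EuclideanSpace ℝ (Fin d), ‖x‖ ^ (-b) * ‖u x‖ ^ (α + 2))
    (hP0 : 0 ≤ P)
    (hgrad : G * N ^ σ ≥ (1 + δ') * (gQ * nQ ^ σ))
    (henergy : ((1 / 2) * G ^ 2 - (1 / (α + 2)) * P) * (N ^ 2) ^ σ ≤ (1 - δ) * EQMQ) :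
    ∃ ε₀ : ℝ, 0 < ε₀ ∧ ∀ ε : ℝ, 0 < ε → ε < ε₀ → ∃ c : ℝ, 0 < c ∧
      8 * G ^ 2 - (4 * ((d : ℝ) * α + 2 * b) / (α + 2)) * P + ε * G ^ 2 ≤ -c := by 
  have hd0 : (0:ℝ) < d := by exact_mod_cast hd
  have hb2 : b < 2 := lt_of_lt_of_le hb' (min_le_left _ _)
  have hdα : 4 - 2*b < (d:ℝ)*α := by
    have := (div_lt_iff₀ hd0).mp hlow; linarith
  have hm : 0 < (d:ℝ)*α + 2*b - 4 := by linarith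
  have hα0 : 0 < α := lt_trans (div_pos (by linarith) hd0) hlow
  have hα2 : (0:ℝ) < α + 2 := by linarith
  have hσpos : 0 < σ := by
    rw [hσ]
    apply div_pos
    · rcases lt_or_ge ((d:ℝ)) 3 with h | h
      · have hd2 : (d:ℝ) ≤ 2 := by
          have : d < 3 := by exact_mod_cast h
          have : d ≤ 2 := by omega
          exact_mod_cast this
        nlinarith [mul_nonneg (by linarith : (0:ℝ) ≤ 2 - (d:ℝ)) hα0.le]
      · have hd3 : 3 ≤ d := by exact_mod_cast h
        have h1 := hhigh hd3
        have hd2 : (0:ℝ) < (d:ℝ) - 2 := by linarith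
        have := (lt_div_iff₀ hd2).mp h1
        nlinarith
    · linarith
  have hN0 : 0 ≤ N := hN ▸ Real.sqrt_nonneg _
  have hG0 : 0 ≤ G := hG ▸ Real.sqrt_nonneg _
  have hgN : 0 < gQ * nQ ^ σ := by positivity
  have hGNpos : 0 < G * N ^ σ := lt_of_lt_of_le (by nlinarith) hgrad
  have hNpos : 0 < N := by
    rcases eq_or_lt_of_le hN0 with h | h
    · rw [← h, Real.zero_rpow (ne_of_gt hσpos), mul_zero] at hGNpos
      exact absurd hGNpos (lt_irrefl _)
    · exact h
  have hM2 : (N^2)^σ = (N^σ)^2 := by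
    rw [← Real.rpow_natCast N 2, ← Real.rpow_mul hN0, mul_comm, Real.rpow_mul hN0,
      Real.rpow_natCast]
  have hM2pos : 0 < (N^2)^σ := by
    rw [hM2]
    have := Real.rpow_pos_of_pos hNpos σ
    positivity
  refine ⟨min (2*((d:ℝ)*α + 2*b - 4)) (2*((d:ℝ)*α + 2*b - 4)*δ), by positivity, ?_⟩
  intro ε hε hε₀
  have hε1 : ε < 2*((d:ℝ)*α + 2*b - 4) := lt_of_lt_of_le hε₀ (min_le_left _ _)
  have hε2 : ε < 2*((d:ℝ)*α + 2*b - 4)*δ := lt_of_lt_of_le hε₀ (min_le_right _ _)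
  refine ⟨(2*((d:ℝ)*α + 2*b - 4)*δ - ε) * (gQ * nQ ^ σ)^2 / ((N^2)^σ), ?_, ?_⟩
  · apply div_pos _ hM2pos
    apply mul_pos (by linarith)
    positivity
  · have hid : (8 * G ^ 2 - 4 * ((d:ℝ) * α + 2 * b) / (α + 2) * P + ε * G ^ 2) * (N^2)^σ
        = 4*((d:ℝ)*α + 2*b) * (((1/2) * G^2 - (1/(α+2)) * P) * (N^2)^σ)
          + (ε - 2*((d:ℝ)*α + 2*b - 4)) * (G^2 * (N^2)^σ) := by
      field_simp
      ring
    have h1 : 4*((d:ℝ)*α + 2*b) * (((1/2) * G^2 - (1/(α+2)) * P) * (N^2)^σ)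
        ≤ 4*((d:ℝ)*α + 2*b) * ((1 - δ) * EQMQ) :=
      mul_le_mul_of_nonneg_left henergy (by linarith)
    have hEQ : 4*((d:ℝ)*α + 2*b) * ((1 - δ) * EQMQ)
        = 2*((d:ℝ)*α + 2*b - 4) * (1 - δ) * (gQ * nQ ^ σ)^2 := by
      rw [hEQMQ]
      have hs : (d:ℝ)*α + 2*b ≠ 0 := by positivity
      field_simp
      ring
    have hge : gQ * nQ ^ σ ≤ G * N ^ σ := le_trans (by nlinarith) hgrad
    have h2 : (gQ * nQ ^ σ)^2 ≤ G^2 * (N^2)^σ := by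
      rw [hM2]
      calc (gQ * nQ ^ σ)^2 ≤ (G * N ^ σ)^2 := by nlinarith
        _ = G^2 * (N^σ)^2 := by ring
    have h3 : (ε - 2*((d:ℝ)*α + 2*b - 4)) * (G^2 * (N^2)^σ)
        ≤ (ε - 2*((d:ℝ)*α + 2*b - 4)) * (gQ * nQ ^ σ)^2 :=
      mul_le_mul_of_nonpos_left h2 (by linarith)
    have hring : 2*((d:ℝ)*α + 2*b - 4) * (1 - δ) * (gQ * nQ ^ σ)^2
        + (ε - 2*((d:ℝ)*α + 2*b - 4)) * (gQ * nQ ^ σ)^2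
        = (ε - 2*((d:ℝ)*α + 2*b - 4)*δ) * (gQ * nQ ^ σ)^2 := by ring
    have key : (8 * G ^ 2 - 4 * ((d:ℝ) * α + 2 * b) / (α + 2) * P + ε * G ^ 2) * (N^2)^σ
        ≤ (ε - 2*((d:ℝ)*α + 2*b - 4)*δ) * (gQ * nQ ^ σ)^2 := by linarith
    calc 8 * G ^ 2 - 4 * ((d:ℝ) * α + 2 * b) / (α + 2) * P + ε * G ^ 2
        ≤ (ε - 2*((d:ℝ)*α + 2*b - 4)*δ) * (gQ * nQ ^ σ)^2 / ((N^2)^σ) :=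
          (le_div_iff₀ hM2pos).mpr key
      _ = -((2*((d:ℝ)*α + 2*b - 4)*δ - ε) * (gQ * nQ ^ σ)^2 / ((N^2)^σ)) := by ring
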